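/- Let A : [n]^k → [N] be a function and let b < log₂ N be a natural number. Define c_n = min over partitions {S_1,…,S_{2^b}} of [n]^k into exactly 2^b parts of max_i N_k(A,S_i) (so that N^h_{k,b}(A) = b + c_n), and define c_d analogously with D_k in place of N_k (so that D^h_{k,b}(A) = b + c_d). Then c_d ≤ (k−1)·2^{c_n} + c_n. -/

import Mathlib

/-- Transcript of `c` bits, each bit determined from the previous transcript. -/
def buildTranscript (step : List Bool → Bool) : ℕ → List Bool
  | 0 => []
  | m + 1 => buildTranscript step m ++ [step (buildTranscript step m)]

/-- A deterministic number-on-the-forehead style protocol with `k` players on input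
space `I`, where `Vis i x x'` means player `i` cannot distinguish the inputs `x` and
`x'` (player `i` sees everything except their own input).  The protocol runs for
exactly `c` rounds; in each round a speaker, determined by the transcript so far,
writes one bit on the blackboard, and this bit may depend only on the part of the
input that the speaker sees.  The output is determined by the full transcript. -/
structure DProt (k : ℕ) (I : Type) (Vis : Fin k → I → I → Prop) (Y : Type) (c : ℕ) where
  speaker : List Bool → Fin k
  msg : List Bool → I → Bool
  msg_nof : ∀ t x x', Vis (speaker t) x x' → msg t x = msg t x'
  out : List Bool → Y

def DProt.run {k I Vis Y c} (P : DProt k I Vis Y c) (x : I) : Y :=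
  P.out (buildTranscript (fun t => P.msg t x) c)

/-- Deterministic NOF communication complexity of `f` restricted to `S`. -/
noncomputable def DCC {k : ℕ} {I Y : Type} (Vis : Fin k → I → I → Prop)
    (f : I → Y) (S : Set I) : ℕ :=
  sInf { c | ∃ P : DProt k I Vis Y c, ∀ x ∈ S, P.run x = f x }

/-- A nondeterministic protocol: a prover first provides a proof string of `a` bits,
after which the players communicate `c` bits as in a deterministic protocol (the bits
may depend on the proof). -/
structure NProt (k : ℕ) (I : Type) (Vis : Fin k → I → I → Prop) (Y : Type) (a c : ℕ) where
  speaker : (Fin a → Bool) → List Bool → Fin k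
  msg : (Fin a → Bool) → List Bool → I → Bool
  msg_nof : ∀ p t x x', Vis (speaker p t) x x' → msg p t x = msg p t x'
  out : (Fin a → Bool) → List Bool → Y

def NProt.run {k I Vis Y a c} (P : NProt k I Vis Y a c) (p : Fin a → Bool) (x : I) : Y :=
  P.out p (buildTranscript (fun t => P.msg p t x) c)

/-- Nondeterministic NOF complexity `N_k(A, S)` of the search problem for `A : I → Y`
restricted to `S`: minimum cost (proof length plus communication) of a protocol which
on every input outputs either a value in `Y` or `none` (i.e. "don't know"), never
outputs a wrong value on inputs in `S`, and on every input of `S` has at least one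
proof leading to the correct value. -/
noncomputable def NCC {k : ℕ} {I Y : Type} (Vis : Fin k → I → I → Prop)
    (A : I → Y) (S : Set I) : ℕ :=
  sInf { m | ∃ a c, m = a + c ∧ ∃ P : NProt k I Vis (Option Y) a c,
    ∀ x ∈ S, (∀ p, P.run p x = none ∨ P.run p x = some (A x)) ∧
      ∃ p, P.run p x = some (A x) }

/-- Nondeterministic NOF complexity `N¹_k(f)` of a boolean function `f`: on every
1-input some proof leads to output `true`, and on every 0-input all proofs lead to
output `false`.  The cost is proof length plus communication. -/
noncomputable def NCCbool {k : ℕ} {I : Type} (Vis : Fin k → I → I → Prop)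
    (f : I → Bool) : ℕ :=
  sInf { m | ∃ a c, m = a + c ∧ ∃ P : NProt k I Vis Bool a c,
    ∀ x, f x = true ↔ ∃ p, P.run p x = true }

/-- Deterministic NOF communication complexity with `b` help bits:
`min` over `t ≤ b` and partitions of the input space into `2 ^ t` parts (given by a
coloring `H`) of `t` plus the maximal complexity of a part. -/
noncomputable def DHelp {k : ℕ} {I Y : Type} (Vis : Fin k → I → I → Prop)
    (A : I → Y) (b : ℕ) : ℕ :=
  sInf { m | ∃ t ≤ b, ∃ H : I → Fin (2 ^ t),
    m = t + Finset.univ.sup fun i => DCC Vis A (H ⁻¹' {i}) }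

/-- Nondeterministic NOF communication complexity with `b` help bits. -/
noncomputable def NHelp {k : ℕ} {I Y : Type} (Vis : Fin k → I → I → Prop)
    (A : I → Y) (b : ℕ) : ℕ :=
  sInf { m | ∃ t ≤ b, ∃ H : I → Fin (2 ^ t),
    m = t + Finset.univ.sup fun i => NCC Vis A (H ⁻¹' {i}) }

/-- A one-way protocol: player `last` first sends a message of `a` bits (depending
only on what they see), after which the remaining players communicate `c` more bits
without the participation of player `last`. -/
structure OWProt (k : ℕ) (I : Type) (Vis : Fin k → I → I → Prop) (Y : Type)
    (last : Fin k) (a c : ℕ) where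
  pre : I → Fin a → Bool
  pre_nof : ∀ x x', Vis last x x' → pre x = pre x'
  speaker : (Fin a → Bool) → List Bool → Fin k
  speaker_ne : ∀ p t, speaker p t ≠ last
  msg : (Fin a → Bool) → List Bool → I → Bool
  msg_nof : ∀ p t x x', Vis (speaker p t) x x' → msg p t x = msg p t x'
  out : (Fin a → Bool) → List Bool → Y

def OWProt.run {k I Vis Y last a c} (P : OWProt k I Vis Y last a c) (x : I) : Y :=
  P.out (P.pre x) (buildTranscript (fun t => P.msg (P.pre x) t x) c)

/-- One-way NOF communication complexity `D¹_k(f)`, where player `last` speaks first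
(a single message) and then the other players communicate. -/
noncomputable def OWCC {k : ℕ} {I Y : Type} (Vis : Fin k → I → I → Prop)
    (f : I → Y) (last : Fin k) : ℕ :=
  sInf { m | ∃ a c, m = a + c ∧ ∃ P : OWProt k I Vis Y last a c, ∀ x, P.run x = f x }

/-- Standard NOF visibility: player `i` sees all coordinates except the `i`-th one. -/
def nofVis (k : ℕ) (W : Type) : Fin k → (Fin k → W) → (Fin k → W) → Prop :=
  fun i x x' => ∀ j, j ≠ i → x j = x' j

/-- NOF visibility for `k` players on inputs in `(Fin (k-1) → W) × Z`: players
`0, …, k-2` hold the coordinates of the first component on their foreheads, and the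
`k`-th player (index `k-1`) holds the second component. -/
def liftVis (k : ℕ) (W Z : Type) :
    Fin k → ((Fin (k - 1) → W) × Z) → ((Fin (k - 1) → W) × Z) → Prop :=
  fun i z z' => (∀ j : Fin (k - 1), (j : ℕ) ≠ (i : ℕ) → z.1 j = z'.1 j) ∧
    ((i : ℕ) = k - 1 ∨ z.2 = z'.2)

/-- `C` is a cylinder in coordinate `i`: membership does not depend on coordinate `i`. -/
def IsCylinder (k : ℕ) (W : Type) (i : Fin k) (C : Set (Fin k → W)) : Prop :=
  ∀ x x', (∀ j, j ≠ i → x j = x' j) → (x ∈ C ↔ x' ∈ C)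

/-- `C` is a cylinder intersection: an intersection of cylinders, one per coordinate. -/
def IsCylinderIntersection (k : ℕ) (W : Type) (C : Set (Fin k → W)) : Prop :=
  ∃ Cs : Fin k → Set (Fin k → W), (∀ i, IsCylinder k W i (Cs i)) ∧ C = ⋂ i, Cs i

/-- `disc(A, S, y) = | |A⁻¹(y) ∩ S| - |S| / N | / |X|` where `N` is the number of
colors and `X` is the input space. -/
noncomputable def discVal (k : ℕ) (W Y : Type) (A : (Fin k → W) → Y)
    (S : Set (Fin k → W)) (y : Y) : ℝ :=
  |(Nat.card ↥(A ⁻¹' {y} ∩ S) : ℝ) - (Nat.card ↥S : ℝ) / (Nat.card Y : ℝ)| /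
    (Nat.card (Fin k → W) : ℝ)

/-- Multicolor discrepancy of `A`: the supremum of `disc(A, S, y)` over all cylinder
intersections `S` and all colors `y`. -/
noncomputable def multiDisc (k : ℕ) (W Y : Type) (A : (Fin k → W) → Y) : ℝ :=
  sSup { d : ℝ | ∃ S y, IsCylinderIntersection k W S ∧ d = discVal k W Y A S y }


/-! ### Auxiliary machinery -/

section Aux

lemma bt_length (s : List Bool → Bool) (j : ℕ) : (buildTranscript s j).length = j := by
  induction j with
  | zero => rfl
  | succ j ih => simp [buildTranscript, ih]

lemma bt_append (s : List Bool → Bool) (j d : ℕ) :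
    ∃ L, buildTranscript s (j + d) = buildTranscript s j ++ L := by
  induction d with
  | zero => exact ⟨[], by simp⟩
  | succ d ih =>
    obtain ⟨L, hL⟩ := ih
    exact ⟨L ++ [s (buildTranscript s (j + d))], by
      show buildTranscript s (j+d) ++ _ = _
      rw [← List.append_assoc, ← hL]
      rfl⟩

lemma bt_take (s : List Bool → Bool) {j j' : ℕ} (h : j ≤ j') :
    (buildTranscript s j').take j = buildTranscript s j := by
  obtain ⟨d, rfl⟩ := Nat.exists_eq_add_of_le h
  obtain ⟨L, hL⟩ := bt_append s j d
  rw [hL, List.take_append_of_le_length (by simp [bt_length]),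
    List.take_of_length_le (by simp [bt_length])]

lemma bt_getD (s : List Bool → Bool) {l j : ℕ} (h : l < j) :
    (buildTranscript s j).getD l false = s (buildTranscript s l) := by
  induction j with
  | zero => omega
  | succ j ih =>
    show (buildTranscript s j ++ [s (buildTranscript s j)]).getD l false = _
    rcases Nat.lt_or_ge l j with h' | h'
    · rw [List.getD_append _ _ _ _ (by simp [bt_length, h']), ih h']
    · have : l = j := by omega
      subst this
      rw [List.getD_eq_getElem _ _ (by simp [bt_length])]
      simp [List.getElem_append_right, bt_length]

lemma bt_eq_of (s : List Bool → Bool) (c : ℕ) (L : List Bool) (hL : L.length = c)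
    (h : ∀ r : Fin c, s (L.take (r : ℕ)) = L.getD (r : ℕ) false) : buildTranscript s c = L := by
  induction c generalizing L with
  | zero => simpa [buildTranscript] using (List.length_eq_zero_iff.mp hL).symm
  | succ c ih =>
    have hL' : (L.take c).length = c := by simp [hL]
    have hbc : buildTranscript s c = L.take c := by
      apply ih _ hL'
      intro r
      have h1 : (L.take c).take (r : ℕ) = L.take (r : ℕ) := by
        rw [List.take_take]; congr 1; omega
      have h2 : (L.take c).getD (r : ℕ) false = L.getD (r : ℕ) false := by
        rw [List.getD_eq_getElem _ _ (by rw [hL']; exact r.isLt),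
            List.getD_eq_getElem _ _ (by omega)]
        simp
      rw [h1, h2]; exact h ⟨r, by omega⟩
    show buildTranscript s c ++ [s (buildTranscript s c)] = L
    rw [hbc]
    have h3 : s (L.take c) = L.getD c false := h ⟨c, by omega⟩
    rw [h3, List.getD_eq_getElem _ _ (by omega)]
    rw [List.take_concat_get' _ _ (by omega)]
    exact List.take_of_length_le (by omega)

lemma bt_congr (s s' : List Bool → Bool) (h : ∀ t, s t = s' t) (j : ℕ) :
    buildTranscript s j = buildTranscript s' j := by
  induction j with
  | zero => rfl
  | succ j ih => show _ ++ _ = _ ++ _; rw [ih, h]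

noncomputable def bitsEquiv (m : ℕ) : (Fin m → Bool) ≃ Fin (2 ^ m) :=
  Fintype.equivFinOfCardEq (by simp)

noncomputable def encodeFin {n : ℕ} (v : Fin n) : Fin n → Bool :=
  (bitsEquiv n).symm (Fin.castLE (Nat.lt_two_pow_self (n := n)).le v)

noncomputable def decodeFin (n : ℕ) (g : Fin n → Bool) : Option (Fin n) :=
  if h : (((bitsEquiv n) g : Fin (2 ^ n)) : ℕ) < n then some ⟨_, h⟩ else none

lemma decode_encode {n : ℕ} (v : Fin n) : decodeFin n (encodeFin v) = some v := by
  simp [decodeFin, encodeFin, v.isLt]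

lemma mod_succ_mod_ne {a k : ℕ} (hk : 2 ≤ k) : a % k ≠ (a + 1) % k := by
  intro h
  have h1 : (a + 1) % k = (a % k + 1) % k := by
    conv_lhs => rw [← Nat.mod_add_mod]
  have h2 : a % k < k := Nat.mod_lt _ (by omega)
  rcases Nat.lt_or_ge (a % k + 1) k with hc | hc
  · rw [h1, Nat.mod_eq_of_lt hc] at h; omega
  · have : a % k + 1 = k := by omega
    rw [h1, this, Nat.mod_self] at h
    omega

/-! ### A trivial exact nondeterministic protocol (broadcast everything) -/

noncomputable def broadcastProt (k n N : ℕ) (hk : 2 ≤ k)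
    (A : (Fin k → Fin n) → Fin N) :
    NProt k (Fin k → Fin n) (nofVis k (Fin n)) (Option (Fin N)) 0 (k * n) where
  speaker _ T := ⟨(T.length / n + 1) % k, Nat.mod_lt _ (by omega)⟩
  msg _ T x := if h : T.length % n < n then
      encodeFin (x ⟨T.length / n % k, Nat.mod_lt _ (by omega)⟩) ⟨T.length % n, h⟩
    else false
  msg_nof := by
    intro p T x x' hvis
    have hx : x ⟨T.length / n % k, Nat.mod_lt _ (by omega)⟩
        = x' ⟨T.length / n % k, Nat.mod_lt _ (by omega)⟩ :=
      hvis _ (Fin.ne_of_val_ne (mod_succ_mod_ne hk))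
    simp only [hx]
  out _ T := if h : ∀ j : Fin k,
      (decodeFin n (fun r : Fin n => T.getD ((j : ℕ) * n + (r : ℕ)) false)).isSome then
      some (A fun j =>
        (decodeFin n (fun r : Fin n => T.getD ((j : ℕ) * n + (r : ℕ)) false)).get (h j))
    else none

lemma broadcast_correct (k n N : ℕ) (hk : 2 ≤ k) (A : (Fin k → Fin n) → Fin N)
    (p : Fin 0 → Bool) (x : Fin k → Fin n) :
    (broadcastProt k n N hk A).run p x = some (A x) := by
  have hn : 0 < n := (x ⟨0, by omega⟩).pos
  set P := broadcastProt k n N hk A with hP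
  set s : List Bool → Bool := fun t => P.msg p t x with hs
  have key : ∀ j : Fin k, (fun r : Fin n =>
      (buildTranscript s (k * n)).getD ((j : ℕ) * n + (r : ℕ)) false) = encodeFin (x j) := by
    intro j
    funext r
    have hlt : (j : ℕ) * n + (r : ℕ) < k * n := by
      calc (j : ℕ) * n + (r : ℕ) < (j : ℕ) * n + n := by omega
      _ = ((j : ℕ) + 1) * n := by ring
      _ ≤ k * n := Nat.mul_le_mul_right _ (by omega)
    rw [bt_getD s hlt]
    have hlen : (buildTranscript s ((j : ℕ) * n + (r : ℕ))).length = (j : ℕ) * n + (r : ℕ) :=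
      bt_length ..
    have hmod : ((j : ℕ) * n + (r : ℕ)) % n = (r : ℕ) := by
      rw [Nat.mul_add_mod', Nat.mod_eq_of_lt r.isLt]
    have hdiv : ((j : ℕ) * n + (r : ℕ)) / n = (j : ℕ) := by
      rw [Nat.add_comm, Nat.add_mul_div_right _ _ hn, Nat.div_eq_of_lt r.isLt, Nat.zero_add]
    show (broadcastProt k n N hk A).msg p (buildTranscript s ((j : ℕ) * n + (r : ℕ))) x
        = encodeFin (x j) r
    simp only [broadcastProt, hlen, hmod, hdiv, Nat.mod_eq_of_lt j.isLt]
    rw [dif_pos r.isLt]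
  show P.out p (buildTranscript s (k * n)) = some (A x)
  simp only [hP, broadcastProt, key, decode_encode]
  simp

/-! ### The main simulation -/

variable {k : ℕ} {I : Type} {Vis : Fin k → I → I → Prop} {Y : Type} {a c : ℕ}

noncomputable def pairEquiv (a c : ℕ) :
    ((Fin a → Bool) × (Fin c → Bool)) ≃ Fin (2 ^ (a + c)) :=
  Fintype.equivFinOfCardEq (by simp [pow_add])

def consAt (P : NProt k I Vis Y a c) (i : Fin k)
    (pr : (Fin a → Bool) × (Fin c → Bool)) (x : I) : Bool :=
  decide (∀ r : Fin c, P.speaker pr.1 ((List.ofFn pr.2).take (r : ℕ)) = i →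
    P.msg pr.1 ((List.ofFn pr.2).take (r : ℕ)) x = pr.2 r)

lemma consAt_nof (P : NProt k I Vis Y a c) (i : Fin k)
    (pr : (Fin a → Bool) × (Fin c → Bool)) {x x' : I} (h : Vis i x x') :
    consAt P i pr x = consAt P i pr x' := by
  have key : ∀ t, P.speaker pr.1 t = i → P.msg pr.1 t x = P.msg pr.1 t x' :=
    fun t ht => P.msg_nof pr.1 t x x' (ht ▸ h)
  unfold consAt
  apply decide_eq_decide.mpr
  constructor
  · intro H r hr; rw [← key _ hr]; exact H r hr
  · intro H r hr; rw [key _ hr]; exact H r hr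

noncomputable def goodb (P : NProt k I Vis (Option Y) a c) (hk : 2 ≤ k) (x : I)
    (T1 : List Bool) (q : Fin (2 ^ (a + c))) : Bool :=
  (decide (∀ i : Fin (k-1), T1.getD ((i : ℕ) * 2 ^ (a + c) + (q : ℕ)) false = true))
  && consAt P ⟨k - 1, by omega⟩ ((pairEquiv a c).symm q) x
  && (P.out ((pairEquiv a c).symm q).1 (List.ofFn ((pairEquiv a c).symm q).2)).isSome

noncomputable def chosenIdx (P : NProt k I Vis (Option Y) a c) (hk : 2 ≤ k) (x : I)
    (T1 : List Bool) : Fin (2 ^ (a + c)) :=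
  if h : (Finset.univ.filter (fun q => goodb P hk x T1 q = true)).Nonempty then
    (Finset.univ.filter (fun q => goodb P hk x T1 q = true)).min' h
  else ⟨0, Nat.two_pow_pos _⟩

lemma goodb_nof (P : NProt k I Vis (Option Y) a c) (hk : 2 ≤ k) {x x' : I}
    (T1 : List Bool) (h : Vis ⟨k - 1, by omega⟩ x x') :
    goodb P hk x T1 = goodb P hk x' T1 := by
  funext q
  unfold goodb
  rw [consAt_nof P _ _ h]

lemma chosenIdx_nof (P : NProt k I Vis (Option Y) a c) (hk : 2 ≤ k) {x x' : I}
    (T1 : List Bool) (h : Vis ⟨k - 1, by omega⟩ x x') :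
    chosenIdx P hk x T1 = chosenIdx P hk x' T1 := by
  unfold chosenIdx
  simp only [goodb_nof P hk T1 h]

noncomputable def mainProt (P : NProt k I Vis (Option Y) a c) (hk : 2 ≤ k) [Inhabited Y] :
    DProt k I Vis Y ((k - 1) * 2 ^ (a + c) + (a + c)) where
  speaker T := ⟨min (T.length / 2 ^ (a + c)) (k - 1), by omega⟩
  msg T x :=
    if T.length < (k - 1) * 2 ^ (a + c) then
      consAt P ⟨min (T.length / 2 ^ (a + c)) (k - 1), by omega⟩
        ((pairEquiv a c).symm ⟨T.length % 2 ^ (a + c), Nat.mod_lt _ (Nat.two_pow_pos _)⟩) x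
    else if h2 : T.length - (k - 1) * 2 ^ (a + c) < a + c then
      (bitsEquiv (a + c)).symm (chosenIdx P hk x (T.take ((k - 1) * 2 ^ (a + c))))
        ⟨T.length - (k - 1) * 2 ^ (a + c), h2⟩
    else false
  msg_nof := by
    intro T x x' hvis
    by_cases hT : T.length < (k - 1) * 2 ^ (a + c)
    · rw [if_pos hT, if_pos hT]
      exact consAt_nof P _ _ hvis
    · rw [if_neg hT, if_neg hT]
      have hmin : min (T.length / 2 ^ (a + c)) (k - 1) = k - 1 := by
        have : k - 1 ≤ T.length / 2 ^ (a + c) :=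
          (Nat.le_div_iff_mul_le (Nat.two_pow_pos _)).mpr (by omega)
        omega
      have hvis' : Vis ⟨k - 1, by omega⟩ x x' := by
        have e : (⟨min (T.length / 2 ^ (a + c)) (k - 1), by omega⟩ : Fin k)
            = ⟨k - 1, by omega⟩ := Fin.ext hmin
        rw [← e]; exact hvis
      simp only [chosenIdx_nof P hk _ hvis']
  out T :=
    (P.out ((pairEquiv a c).symm
        ((bitsEquiv (a + c)) (fun r : Fin (a + c) =>
          T.getD ((k - 1) * 2 ^ (a + c) + (r : ℕ)) false))).1
      (List.ofFn ((pairEquiv a c).symm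
        ((bitsEquiv (a + c)) (fun r : Fin (a + c) =>
          T.getD ((k - 1) * 2 ^ (a + c) + (r : ℕ)) false))).2)).getD default

lemma mainProt_correct [Inhabited Y] (P : NProt k I Vis (Option Y) a c) (hk : 2 ≤ k)
    (A : I → Y) (S : Set I)
    (hP : ∀ x ∈ S, (∀ p, P.run p x = none ∨ P.run p x = some (A x)) ∧
      ∃ p, P.run p x = some (A x)) :
    ∀ x ∈ S, (mainProt P hk).run x = A x := by
  intro x hx
  set M : ℕ := 2 ^ (a + c) with hM
  set cm : ℕ := (k - 1) * M with hcm
  set E := pairEquiv a c with hE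
  set s : List Bool → Bool := fun T => (mainProt P hk).msg T x with hs
  set B : ℕ → List Bool := buildTranscript s with hB
  -- phase 1 transcript values
  have hBcm : ∀ (i : Fin (k - 1)) (q : Fin M), (B cm).getD ((i : ℕ) * M + (q : ℕ)) false
      = consAt P ⟨(i : ℕ), by omega⟩ (E.symm q) x := by
    intro i q
    have hlt : (i : ℕ) * M + (q : ℕ) < cm := by
      calc (i : ℕ) * M + (q : ℕ) < (i : ℕ) * M + M := by omega
      _ = ((i : ℕ) + 1) * M := by ring
      _ ≤ (k - 1) * M := Nat.mul_le_mul_right _ (by omega)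
    rw [hB, bt_getD s hlt]
    show (mainProt P hk).msg (buildTranscript s ((i : ℕ) * M + (q : ℕ))) x = _
    have hMpos : 0 < M := Nat.two_pow_pos _
    have hdiv : ((i : ℕ) * M + (q : ℕ)) / M = (i : ℕ) := by
      rw [Nat.add_comm, Nat.add_mul_div_right _ _ hMpos, Nat.div_eq_of_lt q.isLt, Nat.zero_add]
    have hmod : ((i : ℕ) * M + (q : ℕ)) % M = (q : ℕ) := by
      rw [Nat.mul_add_mod', Nat.mod_eq_of_lt q.isLt]
    simp only [mainProt, bt_length]
    rw [if_pos hlt]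
    have e1 : (⟨min (((i : ℕ) * M + (q : ℕ)) / M) (k - 1), by omega⟩ : Fin k)
        = ⟨(i : ℕ), by omega⟩ := Fin.ext (by
      show min _ _ = (i : ℕ)
      rw [hdiv]
      exact min_eq_left (by omega))
    have e2 : (⟨((i : ℕ) * M + (q : ℕ)) % M, Nat.mod_lt _ (Nat.two_pow_pos _)⟩ : Fin M) = q :=
      Fin.ext (show ((i : ℕ) * M + (q : ℕ)) % M = (q : ℕ) from hmod)
    rw [e1, e2]
  have consAt_all : ∀ pr : (Fin a → Bool) × (Fin c → Bool),
      (∀ i : Fin k, consAt P i pr x = true) ↔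
      ∀ r : Fin c, P.msg pr.1 ((List.ofFn pr.2).take (r : ℕ)) x = pr.2 r := by
    intro pr
    constructor
    · intro h r
      have := h (P.speaker pr.1 ((List.ofFn pr.2).take (r : ℕ)))
      rw [consAt, decide_eq_true_eq] at this
      exact this r rfl
    · intro h i
      rw [consAt, decide_eq_true_eq]
      intro r _
      exact h r
  have hgood_iff : ∀ q : Fin M, goodb P hk x (B cm) q = true ↔
      ((∀ r : Fin c, P.msg (E.symm q).1 ((List.ofFn (E.symm q).2).take (r : ℕ)) x
        = (E.symm q).2 r) ∧
      (P.out (E.symm q).1 (List.ofFn (E.symm q).2)).isSome = true) := by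
    intro q
    rw [goodb, Bool.and_eq_true, Bool.and_eq_true, decide_eq_true_eq]
    constructor
    · rintro ⟨⟨h1, h2⟩, h3⟩
      refine ⟨(consAt_all _).mp ?_, h3⟩
      intro i
      rcases Nat.lt_or_ge (i : ℕ) (k - 1) with hi | hi
      · have := h1 ⟨(i : ℕ), hi⟩
        rw [hBcm ⟨(i : ℕ), hi⟩ q] at this
        have e : (⟨((⟨(i : ℕ), hi⟩ : Fin (k - 1)) : ℕ), by omega⟩ : Fin k) = i :=
          Fin.ext rfl
        rw [e] at this
        exact this
      · have e : i = ⟨k - 1, by omega⟩ := Fin.ext (by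
          have := i.isLt
          show (i : ℕ) = k - 1
          omega)
        rw [e]
        exact h2
    · rintro ⟨h1, h3⟩
      have hall := (consAt_all _).mpr h1
      exact ⟨⟨fun i => by rw [hBcm i q]; exact hall _, hall _⟩, h3⟩
  have fullCons_run : ∀ pr : (Fin a → Bool) × (Fin c → Bool),
      (∀ r : Fin c, P.msg pr.1 ((List.ofFn pr.2).take (r : ℕ)) x = pr.2 r) →
      P.run pr.1 x = P.out pr.1 (List.ofFn pr.2) := by
    intro pr h
    show P.out pr.1 _ = P.out pr.1 _
    congr 1
    apply bt_eq_of _ c _ List.length_ofFn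
    intro r
    rw [List.getD_eq_getElem _ _ (by simpa using r.isLt), List.getElem_ofFn]
    exact h r
  -- completeness: a good pair exists
  obtain ⟨p0, hp0⟩ := (hP x hx).2
  set B0 : List Bool := buildTranscript (fun t => P.msg p0 t x) c with hB0
  set t0 : Fin c → Bool := fun r => B0.getD (r : ℕ) false with ht0
  have hofn : List.ofFn t0 = B0 := by
    apply List.ext_getElem (by simp [hB0, bt_length])
    intro l h1 h2
    simp only [List.getElem_ofFn, ht0]
    rw [List.getD_eq_getElem _ _ h2]
  have hfull0 : ∀ r : Fin c, P.msg p0 ((List.ofFn t0).take (r : ℕ)) x = t0 r := by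
    intro r
    rw [hofn, hB0, bt_take _ (le_of_lt r.isLt), ht0]
    show _ = (buildTranscript (fun t => P.msg p0 t x) c).getD (r : ℕ) false
    rw [bt_getD _ r.isLt]
  have hout0 : P.out p0 (List.ofFn t0) = some (A x) := by rw [hofn]; exact hp0
  have hne : (Finset.univ.filter (fun q : Fin M => goodb P hk x (B cm) q = true)).Nonempty := by
    refine ⟨E (p0, t0), Finset.mem_filter.mpr ⟨Finset.mem_univ _, ?_⟩⟩
    rw [hgood_iff, Equiv.symm_apply_apply]
    exact ⟨hfull0, by rw [hout0]; rfl⟩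
  set qc : Fin M := chosenIdx P hk x (B cm) with hqcdef
  have hqc : goodb P hk x (B cm) qc = true := by
    rw [hqcdef, chosenIdx, dif_pos hne]
    exact (Finset.mem_filter.mp (Finset.min'_mem _ hne)).2
  obtain ⟨hfullc, hsomec⟩ := (hgood_iff qc).mp hqc
  have hrunc : P.out (E.symm qc).1 (List.ofFn (E.symm qc).2) = some (A x) := by
    have h1 := fullCons_run _ hfullc
    rcases (hP x hx).1 (E.symm qc).1 with h2 | h2
    · rw [h1] at h2; rw [h2] at hsomec; simp at hsomec
    · rw [← h1]; exact h2
  -- phase 2 transcript values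
  have hph2 : ∀ r : Fin (a + c), (B (cm + (a + c))).getD (cm + (r : ℕ)) false
      = (bitsEquiv (a + c)).symm qc r := by
    intro r
    have hr := r.isLt
    rw [hB, bt_getD s (by omega)]
    show (mainProt P hk).msg (buildTranscript s (cm + (r : ℕ))) x = _
    have h1 : (k - 1) * 2 ^ (a + c) = cm := by rw [hcm, hM]
    simp only [mainProt, bt_length]
    rw [h1]
    rw [if_neg (show ¬(cm + (r : ℕ) < cm) by omega),
      dif_pos (show cm + (r : ℕ) - cm < a + c by omega)]
    rw [bt_take s (show cm ≤ cm + (r : ℕ) by omega)]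
    have efin : (⟨cm + (r : ℕ) - cm, by omega⟩ : Fin (a + c)) = r := by
      apply Fin.ext
      show cm + (r : ℕ) - cm = (r : ℕ)
      omega
    show (bitsEquiv (a + c)).symm qc (⟨cm + (r : ℕ) - cm, by omega⟩ : Fin (a + c))
        = (bitsEquiv (a + c)).symm qc r
    rw [efin]
  -- conclusion
  show (mainProt P hk).out (B (cm + (a + c))) = A x
  have hfn : (fun r : Fin (a + c) => (B (cm + (a + c))).getD ((k - 1) * 2 ^ (a + c) + (r : ℕ)) false)
      = (bitsEquiv (a + c)).symm qc := funext fun r => hph2 r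
  show (P.out ((pairEquiv a c).symm ((bitsEquiv (a + c)) _)).1
      (List.ofFn ((pairEquiv a c).symm ((bitsEquiv (a + c)) _)).2)).getD default = A x
  rw [hfn, Equiv.apply_symm_apply, ← hE, hrunc]
  rfl

end Aux


lemma DCC_le_of_nprot {k : ℕ} {I : Type} {Vis : Fin k → I → I → Prop} {Y : Type}
    [Inhabited Y] (hk : 2 ≤ k) (A : I → Y) (S : Set I) (a c : ℕ)
    (P : NProt k I Vis (Option Y) a c)
    (hP : ∀ x ∈ S, (∀ p, P.run p x = none ∨ P.run p x = some (A x)) ∧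
      ∃ p, P.run p x = some (A x)) :
    DCC Vis A S ≤ (k - 1) * 2 ^ (a + c) + (a + c) :=
  Nat.sInf_le ⟨mainProt P hk, mainProt_correct P hk A S hP⟩

lemma ncc_set_nonempty {k n N : ℕ} (hk : 2 ≤ k) (A : (Fin k → Fin n) → Fin N)
    (S : Set (Fin k → Fin n)) :
    { m | ∃ a c, m = a + c ∧ ∃ P : NProt k (Fin k → Fin n) (nofVis k (Fin n)) (Option (Fin N)) a c,
      ∀ x ∈ S, (∀ p, P.run p x = none ∨ P.run p x = some (A x)) ∧
        ∃ p, P.run p x = some (A x) }.Nonempty := by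
  refine ⟨0 + k * n, 0, k * n, rfl, broadcastProt k n N hk A, fun x hx => ?_⟩
  exact ⟨fun p => Or.inr (broadcast_correct k n N hk A p x),
    fun _ => false, broadcast_correct k n N hk A _ x⟩

lemma dcc_small {k n N : ℕ} (hk : k ≤ 1) (hN : 0 < N) (A : (Fin k → Fin n) → Fin N)
    (S : Set (Fin k → Fin n)) : DCC (nofVis k (Fin n)) A S = 0 := by
  rcases Nat.le_one_iff_eq_zero_or_eq_one.mp hk with rfl | rfl
  · -- k = 0 : no protocols at all
    rw [DCC]
    convert Nat.sInf_empty
    rw [Set.eq_empty_iff_forall_notMem]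
    rintro m ⟨P, -⟩
    exact (P.speaker []).elim0
  · -- k = 1
    by_cases hconst : ∀ x ∈ S, ∀ y ∈ S, A x = A y
    · haveI := Classical.propDecidable (∃ x, x ∈ S)
      refine Nat.le_zero.mp (Nat.sInf_le ?_)
      refine ⟨⟨fun _ => ⟨0, one_pos⟩, fun _ _ => false, fun _ _ _ _ => rfl,
        fun _ => if h : ∃ x, x ∈ S then A h.choose else ⟨0, hN⟩⟩, ?_⟩
      intro x hx
      show (if h : ∃ x, x ∈ S then A h.choose else ⟨0, hN⟩) = A x
      rw [dif_pos ⟨x, hx⟩]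
      exact hconst _ (Exists.choose_spec ⟨x, hx⟩) _ hx
    · push_neg at hconst
      obtain ⟨x, hx, y, hy, hxy⟩ := hconst
      rw [DCC]
      convert Nat.sInf_empty
      rw [Set.eq_empty_iff_forall_notMem]
      rintro m ⟨P, hP⟩
      have hbt : ∀ t, P.msg t x = P.msg t y := by
        intro t
        apply P.msg_nof
        intro j hj
        exact absurd (Subsingleton.elim j (P.speaker t)) hj
      have : P.run x = P.run y := by
        show P.out _ = P.out _
        rw [bt_congr _ _ hbt]
      rw [hP x hx, hP y hy] at this
      exact hxy this

/-- Let `A : [n]^k → [N]` and let `b < log₂ N` be a natural number.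
Let `c_n` be the minimum over partitions of `[n]^k` into exactly `2^b` parts of the
maximal nondeterministic complexity of a part (so `N^h_{k,b}(A) = b + c_n`), and
define `c_d` analogously with deterministic complexity (so `D^h_{k,b}(A) = b + c_d`).
Then `c_d ≤ (k - 1) · 2^{c_n} + c_n`. -/
theorem det_help_le_exp_nondet_help (k n N b : ℕ)
    (A : (Fin k → Fin n) → Fin N)
    (hb : (b : ℝ) < Real.logb 2 (N : ℝ))
    (cn cd : ℕ)
    (hcn : cn = sInf { m | ∃ H : (Fin k → Fin n) → Fin (2 ^ b),
        m = Finset.univ.sup fun i => NCC (nofVis k (Fin n)) A (H ⁻¹' {i}) })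
    (hcd : cd = sInf { m | ∃ H : (Fin k → Fin n) → Fin (2 ^ b),
        m = Finset.univ.sup fun i => DCC (nofVis k (Fin n)) A (H ⁻¹' {i}) }) :
    cd ≤ (k - 1) * 2 ^ cn + cn := by
  have hN : 0 < N := by
    rcases Nat.eq_zero_or_pos N with h | h
    · subst h
      rw [Nat.cast_zero, Real.logb_zero] at hb
      exact absurd hb (not_lt.mpr (Nat.cast_nonneg b))
    · exact h
  haveI : Inhabited (Fin N) := ⟨⟨0, hN⟩⟩
  rcases Nat.lt_or_ge k 2 with hk | hk
  · -- degenerate case k ≤ 1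
    have h0 : (0 : ℕ) ∈ { m | ∃ H : (Fin k → Fin n) → Fin (2 ^ b),
        m = Finset.univ.sup fun i => DCC (nofVis k (Fin n)) A (H ⁻¹' {i}) } := by
      refine ⟨fun _ => ⟨0, Nat.two_pow_pos b⟩, ?_⟩
      refine (Nat.le_antisymm (Finset.sup_le fun i _ => ?_) (Nat.zero_le _)).symm
      exact le_of_eq (dcc_small (by omega) hN A _)
    calc cd ≤ 0 := hcd ▸ Nat.sInf_le h0
    _ ≤ _ := Nat.zero_le _
  · -- main case
    have hcnmem : cn ∈ { m | ∃ H : (Fin k → Fin n) → Fin (2 ^ b),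
        m = Finset.univ.sup fun i => NCC (nofVis k (Fin n)) A (H ⁻¹' {i}) } := by
      rw [hcn]
      exact Nat.sInf_mem ⟨_, (fun _ => ⟨0, Nat.two_pow_pos b⟩), rfl⟩
    obtain ⟨H, hH⟩ := hcnmem
    have hcdle : cd ≤ Finset.univ.sup fun i => DCC (nofVis k (Fin n)) A (H ⁻¹' {i}) :=
      hcd ▸ Nat.sInf_le ⟨H, rfl⟩
    refine hcdle.trans (Finset.sup_le fun i _ => ?_)
    have hNCCle : NCC (nofVis k (Fin n)) A (H ⁻¹' {i}) ≤ cn :=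
      hH ▸ Finset.le_sup (f := fun i => NCC (nofVis k (Fin n)) A (H ⁻¹' {i}))
        (Finset.mem_univ i)
    have hmem := Nat.sInf_mem (ncc_set_nonempty hk A (H ⁻¹' {i}))
    obtain ⟨a, c, hac, P, hPc⟩ := hmem
    have hle := DCC_le_of_nprot hk A (H ⁻¹' {i}) a c P hPc
    rw [← hac] at hle
    refine hle.trans ?_
    exact Nat.add_le_add
      (Nat.mul_le_mul_left _ (Nat.pow_le_pow_right (by norm_num) hNCCle)) hNCCle
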